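/- Define the D(2,0)-weight of (a,b,c,d) ∈ ℤ₄⁴ as w(a,b)+w(c,d) with w the Shrikhande weight. Then every nonzero element of the subgroup D' of ℤ₄⁴ generated by (0,1,2,3), (1,0,1,2), (0,0,0,2), and (0,0,2,0) has D(2,0)-weight at least 2. -/

import Mathlib

/-- The Shrikhande weight on `ZMod 4 × ZMod 4`. -/
def shW (p : ZMod 4 × ZMod 4) : ℕ :=
  if p = 0 then 0
  else if p ∈ ({(0,1),(0,3),(1,0),(3,0),(1,1),(3,3)} : Finset (ZMod 4 × ZMod 4)) then 1
  else 2

/-- The weight of a vector of `ℤ₄⁴` viewed as a vertex of the Doob graph `D(2,0)`. -/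
def doobW20 (v : Fin 4 → ZMod 4) : ℕ := shW (v 0, v 1) + shW (v 2, v 3)

lemma key : ∀ a b c d : ZMod 4,
    (a • ![0,1,2,3] + b • ![1,0,1,2] + c • ![0,0,0,2] + d • ![(0:ZMod 4),0,2,0]) ≠ 0 →
    2 ≤ doobW20 (a • ![0,1,2,3] + b • ![1,0,1,2] + c • ![0,0,0,2] + d • ![0,0,2,0]) := by
  decide

theorem stmt_11 :
    ∀ v ∈ AddSubgroup.closure
      ({![0,1,2,3], ![1,0,1,2], ![0,0,0,2], ![0,0,2,0]} : Set (Fin 4 → ZMod 4)),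
      v ≠ 0 → 2 ≤ doobW20 v := by
  intro v hv
  have hrep : ∃ a b c d : ZMod 4,
      v = a • ![0,1,2,3] + b • ![1,0,1,2] + c • ![0,0,0,2] + d • ![0,0,2,0] := by
    induction hv using AddSubgroup.closure_induction with
    | mem x hx =>
      rcases hx with h | h | h | h
      · exact ⟨1, 0, 0, 0, by subst h; simp⟩
      · exact ⟨0, 1, 0, 0, by subst h; simp⟩
      · exact ⟨0, 0, 1, 0, by subst h; simp⟩
      · exact ⟨0, 0, 0, 1, by simp at h; subst h; simp⟩
    | zero => exact ⟨0, 0, 0, 0, by simp⟩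
    | add x y _ _ hx hy =>
      obtain ⟨a, b, c, d, rfl⟩ := hx
      obtain ⟨a', b', c', d', rfl⟩ := hy
      exact ⟨a + a', b + b', c + c', d + d', by module⟩
    | neg x _ hx =>
      obtain ⟨a, b, c, d, rfl⟩ := hx
      exact ⟨-a, -b, -c, -d, by module⟩
  obtain ⟨a, b, c, d, rfl⟩ := hrep
  exact key a b c d
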